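/- Let W, U, S, V : ℝ → Matrix (Fin n) (Fin n) ℝ be differentiable functions such that for all t: W(t) = U(t) S(t) V(t)ᵀ, U(t) and V(t) are orthogonal, and S(t) is diagonal. Then for every index k and every t, the derivative of the k-th diagonal entry of S satisfies (S'(t))_{kk} = ( U(t)ᵀ W'(t) V(t) )_{kk}; i.e., writing σ^k(t) := S(t)_{kk} and u^k(t), v^k(t) for the k-th columns of U(t), V(t), one has σ̇^k = (u^k)ᵀ Ẇ v^k. -/

import Mathlib

open Matrix

lemma orth_deriv_diag_zero {n : ℕ} (U U' : ℝ → Matrix (Fin n) (Fin n) ℝ)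
    (hU : ∀ t i j, HasDerivAt (fun s => U s i j) (U' t i j) t)
    (hUorth : ∀ t, (U t)ᵀ * U t = 1) (t : ℝ) (k : Fin n) :
    ∑ i, U t i k * U' t i k = 0 := by
  have h1 : HasDerivAt (fun s => ∑ i, U s i k * U s i k)
      (∑ i, (U' t i k * U t i k + U t i k * U' t i k)) t :=
    HasDerivAt.fun_sum fun i _ => (hU t i k).mul (hU t i k)
  have h2 : (fun s => ∑ i, U s i k * U s i k) = fun _ => (1:ℝ) := by
    funext s
    have := congrFun (congrFun (hUorth s) k) k
    simpa [Matrix.mul_apply, Matrix.one_apply] using this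
  rw [h2] at h1
  have h0 := h1.unique (hasDerivAt_const t 1)
  have h3 : ∑ i, (U' t i k * U t i k + U t i k * U' t i k)
      = 2 * ∑ i, U t i k * U' t i k := by
    rw [Finset.sum_add_distrib,
      Finset.sum_congr rfl fun i _ => mul_comm (U' t i k) (U t i k)]
    ring
  rw [h3] at h0
  linarith

theorem singular_value_dynamics (n : ℕ)
    (W U S V W' U' S' V' : ℝ → Matrix (Fin n) (Fin n) ℝ)
    (hW : ∀ t i j, HasDerivAt (fun s => W s i j) (W' t i j) t)
    (hU : ∀ t i j, HasDerivAt (fun s => U s i j) (U' t i j) t)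
    (hS : ∀ t i j, HasDerivAt (fun s => S s i j) (S' t i j) t)
    (hV : ∀ t i j, HasDerivAt (fun s => V s i j) (V' t i j) t)
    (hSVD : ∀ t, W t = U t * S t * (V t)ᵀ)
    (hUorth : ∀ t, (U t)ᵀ * U t = 1)
    (hVorth : ∀ t, (V t)ᵀ * V t = 1)
    (hSdiag : ∀ t k k', k ≠ k' → S t k k' = 0) :
    ∀ t k, S' t k k = ((U t)ᵀ * W' t * V t) k k := by
  intro t k
  have hUWV : ∀ s, (U s)ᵀ * W s * V s = S s := by
    intro s
    rw [hSVD, Matrix.mul_assoc ((U s)ᵀ), Matrix.mul_assoc, Matrix.mul_assoc,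
      hVorth, Matrix.mul_one, ← Matrix.mul_assoc, hUorth, Matrix.one_mul]
  have hSentry : (fun s => S s k k)
      = fun s => ∑ j, (∑ i, U s i k * W s i j) * V s j k := by
    funext s
    rw [← hUWV s]
    simp [Matrix.mul_apply, Matrix.transpose_apply]
  have key : HasDerivAt (fun s => S s k k)
      (∑ j, ((∑ i, (U' t i k * W t i j + U t i k * W' t i j)) * V t j k
        + (∑ i, U t i k * W t i j) * V' t j k)) t := by
    rw [hSentry]
    exact HasDerivAt.fun_sum fun j _ =>
      (HasDerivAt.fun_sum fun i _ => (hU t i k).mul (hW t i j)).mul (hV t j k)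
  have hder := (hS t k k).unique key
  have e1 : ((U' t)ᵀ * W t * V t) k k
      = ∑ j, (∑ i, U' t i k * W t i j) * V t j k := by
    simp [Matrix.mul_apply, Matrix.transpose_apply]
  have e2 : ((U t)ᵀ * W' t * V t) k k
      = ∑ j, (∑ i, U t i k * W' t i j) * V t j k := by
    simp [Matrix.mul_apply, Matrix.transpose_apply]
  have hsplit : (∑ j, ((∑ i, (U' t i k * W t i j + U t i k * W' t i j)) * V t j k
        + (∑ i, U t i k * W t i j) * V' t j k))
      = ((U' t)ᵀ * W t * V t) k k + ((U t)ᵀ * W' t * V t) k k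
        + (∑ j, (∑ i, U t i k * W t i j) * V' t j k) := by
    rw [e1, e2, ← Finset.sum_add_distrib, ← Finset.sum_add_distrib]
    exact Finset.sum_congr rfl fun j _ => by rw [Finset.sum_add_distrib, add_mul]
  -- first extra piece vanishes
  have hU0 : ((U' t)ᵀ * W t * V t) k k = 0 := by
    have h1 : (U' t)ᵀ * W t * V t = (U' t)ᵀ * U t * S t := by
      rw [hSVD, Matrix.mul_assoc ((U' t)ᵀ), Matrix.mul_assoc, Matrix.mul_assoc,
        hVorth, Matrix.mul_one, ← Matrix.mul_assoc]
    rw [h1, Matrix.mul_apply, Finset.sum_eq_single k]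
    · rw [Matrix.mul_apply]
      have hz := orth_deriv_diag_zero U U' hU hUorth t k
      have : (∑ i, (U' t)ᵀ k i * U t i k) = 0 := by
        rw [show (∑ i, (U' t)ᵀ k i * U t i k) = ∑ i, U t i k * U' t i k from
          Finset.sum_congr rfl fun i _ => by simp [Matrix.transpose_apply, mul_comm]]
        exact hz
      rw [this, zero_mul]
    · intro b _ hb
      rw [hSdiag t b k hb, mul_zero]
    · intro h
      exact absurd (Finset.mem_univ k) h
  -- second extra piece vanishes
  have hUW : (U t)ᵀ * W t = S t * (V t)ᵀ := by
    rw [hSVD, ← Matrix.mul_assoc, ← Matrix.mul_assoc, hUorth, Matrix.one_mul]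
  have hV0 : (∑ j, (∑ i, U t i k * W t i j) * V' t j k) = 0 := by
    have h2 : ∀ j, (∑ i, U t i k * W t i j) = S t k k * V t j k := by
      intro j
      have : (∑ i, U t i k * W t i j) = ((U t)ᵀ * W t) k j := by
        simp [Matrix.mul_apply, Matrix.transpose_apply]
      rw [this, hUW, Matrix.mul_apply, Finset.sum_eq_single k]
      · simp [Matrix.transpose_apply]
      · intro b _ hb
        rw [hSdiag t k b (fun h => hb h.symm), zero_mul]
      · intro h
        exact absurd (Finset.mem_univ k) h
    have hz := orth_deriv_diag_zero V V' hV hVorth t k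
    calc (∑ j, (∑ i, U t i k * W t i j) * V' t j k)
        = ∑ j, S t k k * (V t j k * V' t j k) := by
          exact Finset.sum_congr rfl fun j _ => by rw [h2 j, mul_assoc]
      _ = S t k k * ∑ j, V t j k * V' t j k := by rw [Finset.mul_sum]
      _ = 0 := by rw [hz, mul_zero]
  rw [hder, hsplit, hU0, hV0, zero_add, add_zero]
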